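/- Let M : Matrix (Fin m) (Fin n) ℝ admit two singular value decompositions M = V₁ * Matrix.diagonal λ₁ * U₁ᵀ = V₂ * Matrix.diagonal λ₂ * U₂ᵀ, where for each i ∈ {1,2}: Uᵢ : Matrix (Fin n) (Fin n) ℝ is orthogonal (Uᵢᵀ * Uᵢ = 1 and Uᵢ * Uᵢᵀ = 1), Vᵢ : Matrix (Fin m) (Fin n) ℝ satisfies Vᵢᵀ * Vᵢ = 1, and all entries of λᵢ are strictly positive. Then V₁ * U₁ᵀ = V₂ * U₂ᵀ. That is, the similarity-preserving operator F_M = V Uᵀ induced by an injective M is uniquely determined by M, independently of the choice of singular value decomposition. -/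

import Mathlib

open Matrix

/-- The similarity-preserving operator `F_M = V Uᵀ` induced by an injective `M` (all singular
values strictly positive) is uniquely determined by `M`, independently of the choice of
singular value decomposition. -/
theorem simPreserving_operator_unique {m n : ℕ} (M : Matrix (Fin m) (Fin n) ℝ)
    (U₁ U₂ : Matrix (Fin n) (Fin n) ℝ) (V₁ V₂ : Matrix (Fin m) (Fin n) ℝ)
    (lam₁ lam₂ : Fin n → ℝ)
    (hU₁ : U₁ᵀ * U₁ = 1) (hU₁' : U₁ * U₁ᵀ = 1) (hV₁ : V₁ᵀ * V₁ = 1)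
    (hlam₁ : ∀ i, 0 < lam₁ i)
    (hU₂ : U₂ᵀ * U₂ = 1) (hU₂' : U₂ * U₂ᵀ = 1) (hV₂ : V₂ᵀ * V₂ = 1)
    (hlam₂ : ∀ i, 0 < lam₂ i)
    (hM₁ : M = V₁ * Matrix.diagonal lam₁ * U₁ᵀ)
    (hM₂ : M = V₂ * Matrix.diagonal lam₂ * U₂ᵀ) :
    V₁ * U₁ᵀ = V₂ * U₂ᵀ := by
  set A₁ := U₁ * Matrix.diagonal lam₁ * U₁ᵀ with hA₁def
  set A₂ := U₂ * Matrix.diagonal lam₂ * U₂ᵀ with hA₂def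
  have hct : ∀ (B : Matrix (Fin n) (Fin n) ℝ), Bᴴ = Bᵀ := fun B => rfl
  have hpsd : ∀ (U : Matrix (Fin n) (Fin n) ℝ) (lam : Fin n → ℝ), (∀ i, 0 < lam i) →
      (U * Matrix.diagonal lam * Uᵀ).PosSemidef := by
    intro U lam hlam
    have := (Matrix.posSemidef_diagonal_iff.mpr (fun i => (hlam i).le)).mul_mul_conjTranspose_same U
    simpa [Matrix.conjTranspose_eq_transpose_of_trivial] using this
  have hA₁ : A₁.PosSemidef := hpsd U₁ lam₁ hlam₁
  have hA₂ : A₂.PosSemidef := hpsd U₂ lam₂ hlam₂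
  have hsq : ∀ (U : Matrix (Fin n) (Fin n) ℝ) (lam : Fin n → ℝ), Uᵀ * U = 1 →
      (U * Matrix.diagonal lam * Uᵀ) ^ 2 = U * Matrix.diagonal (fun i => lam i * lam i) * Uᵀ := by
    intro U lam hU
    rw [pow_two]
    calc (U * Matrix.diagonal lam * Uᵀ) * (U * Matrix.diagonal lam * Uᵀ)
        = U * Matrix.diagonal lam * (Uᵀ * U) * Matrix.diagonal lam * Uᵀ := by
          simp only [Matrix.mul_assoc]
      _ = U * (Matrix.diagonal lam * Matrix.diagonal lam) * Uᵀ := by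
          rw [hU]; simp only [Matrix.mul_one, Matrix.mul_assoc]
      _ = U * Matrix.diagonal (fun i => lam i * lam i) * Uᵀ := by
          rw [Matrix.diagonal_mul_diagonal]
  have hMM : ∀ (U : Matrix (Fin n) (Fin n) ℝ) (V : Matrix (Fin m) (Fin n) ℝ)
      (lam : Fin n → ℝ), Vᵀ * V = 1 →
      (V * Matrix.diagonal lam * Uᵀ)ᵀ * (V * Matrix.diagonal lam * Uᵀ)
        = U * Matrix.diagonal (fun i => lam i * lam i) * Uᵀ := by
    intro U V lam hV
    simp only [Matrix.transpose_mul, Matrix.transpose_transpose, Matrix.diagonal_transpose,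
      Matrix.mul_assoc]
    rw [← Matrix.mul_assoc Vᵀ V, hV, Matrix.one_mul,
      ← Matrix.mul_assoc (Matrix.diagonal lam), Matrix.diagonal_mul_diagonal]
  have hkey : A₁ = A₂ := by
    open scoped MatrixOrder in apply (CFC.sq_eq_sq_iff A₁ A₂ hA₁.nonneg hA₂.nonneg).mp
    rw [hA₁def, hA₂def, hsq U₁ lam₁ hU₁, hsq U₂ lam₂ hU₂,
      ← hMM U₁ V₁ lam₁ hV₁, ← hMM U₂ V₂ lam₂ hV₂, ← hM₁, ← hM₂]
  have h1 : (V₁ * U₁ᵀ) * A₁ = M := by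
    rw [hA₁def, hM₁]
    calc V₁ * U₁ᵀ * (U₁ * Matrix.diagonal lam₁ * U₁ᵀ)
        = V₁ * (U₁ᵀ * U₁) * Matrix.diagonal lam₁ * U₁ᵀ := by simp only [Matrix.mul_assoc]
      _ = V₁ * Matrix.diagonal lam₁ * U₁ᵀ := by rw [hU₁]; simp only [Matrix.mul_one]
  have h2 : (V₂ * U₂ᵀ) * A₂ = M := by
    rw [hA₂def, hM₂]
    calc V₂ * U₂ᵀ * (U₂ * Matrix.diagonal lam₂ * U₂ᵀ)
        = V₂ * (U₂ᵀ * U₂) * Matrix.diagonal lam₂ * U₂ᵀ := by simp only [Matrix.mul_assoc]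
      _ = V₂ * Matrix.diagonal lam₂ * U₂ᵀ := by rw [hU₂]; simp only [Matrix.mul_one]
  set B := U₁ * Matrix.diagonal (fun i => (lam₁ i)⁻¹) * U₁ᵀ with hBdef
  have hAB : A₁ * B = 1 := by
    rw [hA₁def, hBdef]
    calc U₁ * Matrix.diagonal lam₁ * U₁ᵀ * (U₁ * Matrix.diagonal (fun i => (lam₁ i)⁻¹) * U₁ᵀ)
        = U₁ * Matrix.diagonal lam₁ * (U₁ᵀ * U₁) * Matrix.diagonal (fun i => (lam₁ i)⁻¹) * U₁ᵀ := by
          simp only [Matrix.mul_assoc]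
      _ = U₁ * (Matrix.diagonal lam₁ * Matrix.diagonal (fun i => (lam₁ i)⁻¹)) * U₁ᵀ := by
          rw [hU₁]; simp only [Matrix.mul_one, Matrix.mul_assoc]
      _ = U₁ * U₁ᵀ := by
          rw [Matrix.diagonal_mul_diagonal]
          have : (fun i => lam₁ i * (lam₁ i)⁻¹) = fun _ => (1:ℝ) := by
            funext i; exact mul_inv_cancel₀ (hlam₁ i).ne'
          rw [this, Matrix.diagonal_one, Matrix.mul_one]
      _ = 1 := hU₁'
  calc V₁ * U₁ᵀ = (V₁ * U₁ᵀ) * (A₁ * B) := by rw [hAB, Matrix.mul_one]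
    _ = ((V₁ * U₁ᵀ) * A₁) * B := by simp only [Matrix.mul_assoc]
    _ = ((V₂ * U₂ᵀ) * A₂) * B := by rw [h1, h2]
    _ = (V₂ * U₂ᵀ) * (A₁ * B) := by rw [hkey]; simp only [Matrix.mul_assoc]
    _ = V₂ * U₂ᵀ := by rw [hAB, Matrix.mul_one]
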